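/- If languages L₁, L₂ ⊆ Σ* are each recognized by some PRA-C with some interval, then each of the languages L₁ ∩ L₂, L₁ ∪ L₂, and the complement Σ* \ L₁ is recognized by some PRA-C with some interval. -/

import Mathlib

/-- A real square matrix is doubly stochastic if all entries are nonnegative and
every row and every column sums to 1. -/
def DoublyStochastic {n : ℕ} (A : Matrix (Fin n) (Fin n) ℝ) : Prop :=
  (∀ i j, 0 ≤ A i j) ∧ (∀ i, ∑ j, A i j = 1) ∧ (∀ j, ∑ i, A i j = 1)

/-- A 1-way probabilistic reversible C-automaton (PRA-C) over input alphabet `α`: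
a finite state set `Fin n`, an initial state, a set of accepting states, and
a doubly stochastic matrix for each symbol of the working alphabet
(the letters of `α` together with the end-markers `#` and `$`). -/
structure PRAC (α : Type) where
  n : ℕ
  q0 : Fin n
  F : Finset (Fin n)
  V : α → Matrix (Fin n) (Fin n) ℝ
  Vhash : Matrix (Fin n) (Fin n) ℝ
  Vdollar : Matrix (Fin n) (Fin n) ℝ
  ds : ∀ a, DoublyStochastic (V a)
  ds_hash : DoublyStochastic Vhash
  ds_dollar : DoublyStochastic Vdollar

namespace PRAC

variable {α : Type}

/-- Acceptance probability of a word `w = σ₁…σ_k`: the total mass on accepting states of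
`V_$ ⬝ V_{σ_k} ⬝ ⋯ ⬝ V_{σ₁} ⬝ V_# ⬝ e_{q₀}`. -/
def accProb (A : PRAC α) (w : List α) : ℝ :=
  ∑ q ∈ A.F,
    (A.Vdollar.mulVec
      (w.foldl (fun v a => (A.V a).mulVec v) (A.Vhash.mulVec (Pi.single A.q0 1)))) q

/-- Recognition of a language with interval `(p₁, p₂)`. -/
def Recognizes (A : PRAC α) (L : Set (List α)) (p1 p2 : ℝ) : Prop :=
  0 ≤ p1 ∧ p1 < p2 ∧ p2 ≤ 1 ∧
  (∀ w ∈ L, p2 ≤ A.accProb w) ∧ (∀ w ∉ L, A.accProb w ≤ p1)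

/-- Recognition with probability `p`, i.e. with interval `(1 - p, p)`. -/
def RecognizesWithProb (A : PRAC α) (L : Set (List α)) (p : ℝ) : Prop :=
  A.Recognizes L (1 - p) p

end PRAC

namespace PRACaux
open PRAC

lemma ds_one {n : ℕ} : DoublyStochastic (1 : Matrix (Fin n) (Fin n) ℝ) := by
  refine ⟨fun i j => ?_, fun i => ?_, fun j => ?_⟩ <;>
    simp [Matrix.one_apply]
  positivity

lemma sum_mulVec {n : ℕ} {M : Matrix (Fin n) (Fin n) ℝ} (h : DoublyStochastic M)
    (v : Fin n → ℝ) : ∑ i, M.mulVec v i = ∑ i, v i := by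
  simp only [Matrix.mulVec, dotProduct]
  rw [Finset.sum_comm]
  simp [← Finset.sum_mul, h.2.2]

lemma mulVec_nonneg {n : ℕ} {M : Matrix (Fin n) (Fin n) ℝ} (h : DoublyStochastic M)
    {v : Fin n → ℝ} (hv : ∀ i, 0 ≤ v i) (i : Fin n) : 0 ≤ M.mulVec v i := by
  simpa [Matrix.mulVec, dotProduct] using
    Finset.sum_nonneg fun j (_ : j ∈ Finset.univ) => mul_nonneg (h.1 i j) (hv j)

def tmat {n m : ℕ} (M : Matrix (Fin n) (Fin n) ℝ) (N : Matrix (Fin m) (Fin m) ℝ) :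
    Matrix (Fin (n * m)) (Fin (n * m)) ℝ :=
  fun i j => M (finProdFinEquiv.symm i).1 (finProdFinEquiv.symm j).1 *
             N (finProdFinEquiv.symm i).2 (finProdFinEquiv.symm j).2

def tvec {n m : ℕ} (u : Fin n → ℝ) (v : Fin m → ℝ) : Fin (n * m) → ℝ :=
  fun k => u (finProdFinEquiv.symm k).1 * v (finProdFinEquiv.symm k).2

lemma sum_tvec {n m : ℕ} (u : Fin n → ℝ) (v : Fin m → ℝ) :
    ∑ k, tvec u v k = (∑ i, u i) * (∑ j, v j) := by
  rw [← Equiv.sum_comp (finProdFinEquiv : Fin n × Fin m ≃ Fin (n * m)), Finset.sum_mul_sum]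
  simp [tvec, Fintype.sum_prod_type]

lemma ds_tmat {n m : ℕ} {M : Matrix (Fin n) (Fin n) ℝ} {N : Matrix (Fin m) (Fin m) ℝ}
    (hM : DoublyStochastic M) (hN : DoublyStochastic N) : DoublyStochastic (tmat M N) := by
  refine ⟨fun i j => mul_nonneg (hM.1 _ _) (hN.1 _ _), fun i => ?_, fun j => ?_⟩
  · rw [← Equiv.sum_comp (finProdFinEquiv : Fin n × Fin m ≃ Fin (n * m))]
    simp only [tmat, Equiv.symm_apply_apply]
    rw [Fintype.sum_prod_type]
    simp [← Finset.mul_sum, hN.2.1, hM.2.1]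
  · rw [← Equiv.sum_comp (finProdFinEquiv : Fin n × Fin m ≃ Fin (n * m))]
    simp only [tmat, Equiv.symm_apply_apply]
    rw [Fintype.sum_prod_type]
    simp [← Finset.mul_sum, hN.2.2, hM.2.2]

lemma mulVec_tmat {n m : ℕ} (M : Matrix (Fin n) (Fin n) ℝ) (N : Matrix (Fin m) (Fin m) ℝ)
    (u : Fin n → ℝ) (v : Fin m → ℝ) :
    (tmat M N).mulVec (tvec u v) = tvec (M.mulVec u) (N.mulVec v) := by
  funext k
  simp only [Matrix.mulVec, dotProduct, tvec, tmat]
  rw [← Equiv.sum_comp (finProdFinEquiv : Fin n × Fin m ≃ Fin (n * m))]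
  simp only [Equiv.symm_apply_apply, Fintype.sum_prod_type]
  rw [Finset.sum_mul_sum]
  congr 1; funext i; congr 1; funext j; ring

/-- The run vector (distribution after reading `# w`, before `$`). -/
def run (A : PRAC α) (w : List α) : Fin A.n → ℝ :=
  w.foldl (fun v a => (A.V a).mulVec v) (A.Vhash.mulVec (Pi.single A.q0 1))

lemma accProb_eq (A : PRAC α) (w : List α) :
    A.accProb w = ∑ q ∈ A.F, A.Vdollar.mulVec (run A w) q := rfl

lemma foldl_nonneg (A : PRAC α) (w : List α) (v : Fin A.n → ℝ) (hv : ∀ i, 0 ≤ v i) :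
    ∀ i, 0 ≤ w.foldl (fun v a => (A.V a).mulVec v) v i := by
  induction w generalizing v with
  | nil => exact hv
  | cons a t ih => exact ih _ (mulVec_nonneg (A.ds a) hv)

lemma foldl_sum (A : PRAC α) (w : List α) (v : Fin A.n → ℝ) :
    ∑ i, w.foldl (fun v a => (A.V a).mulVec v) v i = ∑ i, v i := by
  induction w generalizing v with
  | nil => rfl
  | cons a t ih => rw [List.foldl_cons, ih, sum_mulVec (A.ds a)]

lemma run_nonneg (A : PRAC α) (w : List α) (i : Fin A.n) : 0 ≤ run A w i :=
  foldl_nonneg A w _ (mulVec_nonneg A.ds_hash (fun j => by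
    by_cases h : j = A.q0 <;> simp [Pi.single_apply, h])) i

lemma sum_run (A : PRAC α) (w : List α) : ∑ i, run A w i = 1 := by
  rw [run, foldl_sum, sum_mulVec A.ds_hash]
  simp

lemma final_nonneg (A : PRAC α) (w : List α) (i : Fin A.n) :
    0 ≤ A.Vdollar.mulVec (run A w) i :=
  mulVec_nonneg A.ds_dollar (run_nonneg A w) i

lemma sum_final (A : PRAC α) (w : List α) : ∑ i, A.Vdollar.mulVec (run A w) i = 1 := by
  rw [sum_mulVec A.ds_dollar, sum_run]

lemma accProb_nonneg (A : PRAC α) (w : List α) : 0 ≤ A.accProb w :=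
  Finset.sum_nonneg fun q _ => final_nonneg A w q

lemma accProb_le_one (A : PRAC α) (w : List α) : A.accProb w ≤ 1 := by
  rw [accProb_eq, ← sum_final A w]
  exact Finset.sum_le_sum_of_subset_of_nonneg (Finset.subset_univ _)
    (fun q _ _ => final_nonneg A w q)

/-- Complement automaton: flip accepting states. -/
def comp (A : PRAC α) : PRAC α := { A with F := A.Fᶜ }

lemma comp_accProb (A : PRAC α) (w : List α) : (comp A).accProb w = 1 - A.accProb w := by
  have h : (comp A).accProb w + A.accProb w = 1 := by
    rw [accProb_eq, accProb_eq]
    have : (comp A).Vdollar.mulVec (run (comp A) w) = A.Vdollar.mulVec (run A w) := rfl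
    rw [this]
    rw [show (comp A).F = A.Fᶜ from rfl]
    rw [← sum_final A w, ← Finset.sum_add_sum_compl A.F]
    exact add_comm _ _
  linarith

/-- Product (tensor) automaton. -/
def prod (A B : PRAC α) : PRAC α where
  n := A.n * B.n
  q0 := finProdFinEquiv (A.q0, B.q0)
  F := (A.F ×ˢ B.F).map finProdFinEquiv.toEmbedding
  V a := tmat (A.V a) (B.V a)
  Vhash := tmat A.Vhash B.Vhash
  Vdollar := tmat A.Vdollar B.Vdollar
  ds a := ds_tmat (A.ds a) (B.ds a)
  ds_hash := ds_tmat A.ds_hash B.ds_hash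
  ds_dollar := ds_tmat A.ds_dollar B.ds_dollar

lemma single_tvec (A B : PRAC α) :
    (Pi.single (finProdFinEquiv (A.q0, B.q0)) 1 : Fin (A.n * B.n) → ℝ)
      = tvec (Pi.single A.q0 1) (Pi.single B.q0 1) := by
  funext k
  rcases (finProdFinEquiv : Fin A.n × Fin B.n ≃ Fin (A.n * B.n)).surjective k with ⟨⟨i, j⟩, rfl⟩
  simp only [tvec, Equiv.symm_apply_apply, Pi.single_apply, EmbeddingLike.apply_eq_iff_eq,
    Prod.mk.injEq]
  by_cases hi : i = A.q0 <;> by_cases hj : j = B.q0 <;> simp [hi, hj]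

lemma prod_foldl (A B : PRAC α) (w : List α) (u : Fin A.n → ℝ) (v : Fin B.n → ℝ) :
    w.foldl (fun x a => ((prod A B).V a).mulVec x) (tvec u v)
      = tvec (w.foldl (fun x a => (A.V a).mulVec x) u)
             (w.foldl (fun x a => (B.V a).mulVec x) v) := by
  induction w generalizing u v with
  | nil => rfl
  | cons a t ih =>
      simp only [List.foldl_cons]
      exact (congrArg (fun x => List.foldl (fun x a => ((prod A B).V a).mulVec x) x t)
        (mulVec_tmat (A.V a) (B.V a) u v)).trans (ih _ _)

lemma prod_run (A B : PRAC α) (w : List α) :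
    run (prod A B) w = tvec (run A w) (run B w) := by
  rw [run, run, run, show (prod A B).Vhash.mulVec (Pi.single (prod A B).q0 1)
      = tvec (A.Vhash.mulVec (Pi.single A.q0 1)) (B.Vhash.mulVec (Pi.single B.q0 1)) by
    rw [show (Pi.single (prod A B).q0 1 : Fin (prod A B).n → ℝ)
        = tvec (Pi.single A.q0 1) (Pi.single B.q0 1) from single_tvec A B]
    exact mulVec_tmat _ _ _ _]
  exact prod_foldl A B w _ _

lemma prod_accProb (A B : PRAC α) (w : List α) :
    (prod A B).accProb w = A.accProb w * B.accProb w := by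
  rw [accProb_eq, accProb_eq, accProb_eq, prod_run]
  rw [show (prod A B).Vdollar.mulVec (tvec (run A w) (run B w))
      = tvec (A.Vdollar.mulVec (run A w)) (B.Vdollar.mulVec (run B w)) from mulVec_tmat _ _ _ _]
  rw [show (prod A B).F = (A.F ×ˢ B.F).map finProdFinEquiv.toEmbedding from rfl]
  erw [Finset.sum_map, Finset.sum_product, Finset.sum_mul_sum]
  refine Finset.sum_congr rfl fun x _ => Finset.sum_congr rfl fun y _ => ?_
  show tvec _ _ (finProdFinEquiv (x, y)) = _
  rw [tvec, Equiv.symm_apply_apply]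

/-- One-state automaton accepting everything with probability 1. -/
def triv : PRAC α where
  n := 1
  q0 := 0
  F := {0}
  V _ := 1
  Vhash := 1
  Vdollar := 1
  ds _ := ds_one
  ds_hash := ds_one
  ds_dollar := ds_one

lemma triv_accProb (w : List α) : (triv : PRAC α).accProb w = 1 := by
  have h : ∀ v : Fin 1 → ℝ, w.foldl (fun v a => ((triv : PRAC α).V a).mulVec v) v = v := by
    intro v
    induction w generalizing v with
    | nil => rfl
    | cons a t ih => exact (ih _).trans (Matrix.one_mulVec v)
  show ∑ q ∈ ({0} : Finset (Fin 1)), (Matrix.mulVec (1 : Matrix (Fin 1) (Fin 1) ℝ)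
    (w.foldl (fun v (_ : α) => Matrix.mulVec (1 : Matrix (Fin 1) (Fin 1) ℝ) v)
      (Matrix.mulVec (1 : Matrix (Fin 1) (Fin 1) ℝ) (Pi.single 0 1)))) q = 1
  have h' : ∀ v : Fin 1 → ℝ,
      w.foldl (fun v (_ : α) => Matrix.mulVec (1 : Matrix (Fin 1) (Fin 1) ℝ) v) v = v := h
  rw [h']
  simp

/-- Iterated tensor power. -/
def npow (A : PRAC α) : ℕ → PRAC α
  | 0 => triv
  | k + 1 => prod A (npow A k)

lemma npow_accProb (A : PRAC α) (k : ℕ) (w : List α) :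
    (npow A k).accProb w = (A.accProb w) ^ k := by
  induction k with
  | zero => simpa [npow] using triv_accProb w
  | succ k ih => rw [npow, prod_accProb, ih, pow_succ]; ring

lemma recognizes_comp {A : PRAC α} {L : Set (List α)} {p1 p2 : ℝ}
    (h : A.Recognizes L p1 p2) : (comp A).Recognizes Lᶜ (1 - p2) (1 - p1) := by
  obtain ⟨h0, hlt, h1, hin, hout⟩ := h
  refine ⟨by linarith, by linarith, by linarith, ?_, ?_⟩
  · intro w hw
    rw [comp_accProb]
    have := hout w hw
    linarith
  · intro w hw
    rw [comp_accProb]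
    have := hin w (not_not.mp hw)
    linarith

lemma amplify {A : PRAC α} {L : Set (List α)} {p1 p2 : ℝ}
    (h : A.Recognizes L p1 p2) : ∃ B : PRAC α, B.Recognizes L (1/4) (3/4) := by
  obtain ⟨h0, hlt, h1, hin, hout⟩ := h
  have hp2 : 0 < p2 := lt_of_le_of_lt h0 hlt
  obtain ⟨m, hm⟩ : ∃ m : ℕ, (p1 / p2) ^ m < 1 / 16 :=
    exists_pow_lt_of_lt_one (by norm_num) ((div_lt_one hp2).mpr hlt)
  set s : ℝ := p2 ^ m with hs
  have hs0 : 0 < s := pow_pos hp2 m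
  have hs1 : s ≤ 1 := pow_le_one₀ hp2.le h1
  set N : ℕ := ⌈3 / s⌉₊ with hN
  have hNs : 3 ≤ (N : ℝ) * s := by
    have h' := Nat.le_ceil (3 / s)
    calc (3:ℝ) = 3 / s * s := by field_simp
    _ ≤ N * s := mul_le_mul_of_nonneg_right h' hs0.le
  have hNle : (N : ℝ) ≤ 4 / s := by
    have h1' : (N : ℝ) < 3 / s + 1 := Nat.ceil_lt_add_one (by positivity)
    have h2' : (1 : ℝ) ≤ 1 / s := one_le_one_div hs0 hs1
    have : (3:ℝ)/s + 1/s = 4/s := by ring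
    linarith
  refine ⟨comp (npow (comp (npow A m)) N), ?_⟩
  have hacc : ∀ w, (comp (npow (comp (npow A m)) N)).accProb w
      = 1 - (1 - A.accProb w ^ m) ^ N := by
    intro w
    rw [comp_accProb, npow_accProb, comp_accProb, npow_accProb]
  refine ⟨by norm_num, by norm_num, by norm_num, ?_, ?_⟩
  · intro w hw
    rw [hacc]
    have ha2 : p2 ≤ A.accProb w := hin w hw
    have ha1 : A.accProb w ≤ 1 := accProb_le_one A w
    have ha0 : 0 ≤ A.accProb w := accProb_nonneg A w
    have ham : s ≤ A.accProb w ^ m := pow_le_pow_left₀ hp2.le ha2 m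
    have ham1 : A.accProb w ^ m ≤ 1 := pow_le_one₀ ha0 ha1
    have e1 : (1 - A.accProb w ^ m) ^ N ≤ (1 - s) ^ N :=
      pow_le_pow_left₀ (by linarith) (by linarith) N
    have e2 : (1 - s) ^ N * (1 + N * s) ≤ 1 := by
      have b : 1 + (N:ℝ) * s ≤ (1 + s) ^ N := one_add_mul_le_pow (by linarith) N
      calc (1-s)^N * (1 + (N:ℝ)*s) ≤ (1-s)^N * (1+s)^N :=
            mul_le_mul_of_nonneg_left b (pow_nonneg (by linarith) N)
      _ = ((1-s)*(1+s))^N := (mul_pow _ _ _).symm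
      _ ≤ 1 := pow_le_one₀ (by nlinarith) (by nlinarith)
    have hpos : (0:ℝ) < 1 + N * s := by positivity
    have e3 : (1 - s)^N ≤ 1 / (1 + N*s) := by
      rw [le_div_iff₀ hpos]; exact e2
    have e4 : 1 / (1 + (N:ℝ)*s) ≤ 1/4 := by
      apply one_div_le_one_div_of_le <;> linarith
    linarith
  · intro w hw
    rw [hacc]
    have ha1 : A.accProb w ≤ p1 := hout w hw
    have ha0 : 0 ≤ A.accProb w := accProb_nonneg A w
    set x : ℝ := A.accProb w ^ m with hx
    have hx0 : 0 ≤ x := pow_nonneg ha0 m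
    have ham : x ≤ p1 ^ m := pow_le_pow_left₀ ha0 ha1 m
    have hp1m : p1 ^ m ≤ s / 16 := by
      have hq : p1 ^ m = (p1/p2)^m * s := by
        rw [hs, div_pow]; field_simp
      rw [hq]
      nlinarith [hm.le, hs0.le, pow_nonneg (div_nonneg h0 hp2.le : 0 ≤ p1/p2) m]
    have bern : 1 + (N:ℝ) * (-x) ≤ (1 + (-x)) ^ N :=
      one_add_mul_le_pow (by linarith) N
    have bern' : 1 - (N:ℝ) * x ≤ (1 - x) ^ N := by
      have : (1:ℝ) + -x = 1 - x := by ring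
      rw [this] at bern; linarith [bern]
    have hNx : (N:ℝ) * x ≤ 1/4 := by
      have s1 : (N:ℝ) * x ≤ (N:ℝ) * (s/16) :=
        mul_le_mul_of_nonneg_left (le_trans ham hp1m) (Nat.cast_nonneg N)
      have s2 : (N:ℝ) * (s/16) ≤ (4/s) * (s/16) :=
        mul_le_mul_of_nonneg_right hNle (by positivity)
      have s3 : (4/s) * (s/16) = 1/4 := by field_simp; ring
      linarith
    linarith

lemma recognizes_inter {A B : PRAC α} {L1 L2 : Set (List α)}
    (hA : A.Recognizes L1 (1/4) (3/4)) (hB : B.Recognizes L2 (1/4) (3/4)) :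
    (prod A B).Recognizes (L1 ∩ L2) (1/4) (9/16) := by
  obtain ⟨_, _, _, hin1, hout1⟩ := hA
  obtain ⟨_, _, _, hin2, hout2⟩ := hB
  refine ⟨by norm_num, by norm_num, by norm_num, ?_, ?_⟩
  · rintro w ⟨hw1, hw2⟩
    rw [prod_accProb]
    have i1 := hin1 w hw1
    have i2 := hin2 w hw2
    nlinarith [accProb_le_one A w, accProb_le_one B w]
  · intro w hw
    rw [prod_accProb]
    by_cases hc : w ∈ L1
    · have h2 : w ∉ L2 := fun h2 => hw ⟨hc, h2⟩
      have := hout2 w h2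
      nlinarith [accProb_nonneg A w, accProb_le_one A w, accProb_nonneg B w]
    · have := hout1 w hc
      nlinarith [accProb_nonneg B w, accProb_le_one B w, accProb_nonneg A w]

end PRACaux

/-- The class of languages recognized by PRA-C is closed under intersection, union and
complement. -/
theorem prac_closed_boolean {α : Type} (L1 L2 : Set (List α)) (A1 A2 : PRAC α)
    (p11 p12 p21 p22 : ℝ)
    (h1 : A1.Recognizes L1 p11 p12) (h2 : A2.Recognizes L2 p21 p22) :
    (∃ (B : PRAC α) (q1 q2 : ℝ), B.Recognizes (L1 ∩ L2) q1 q2) ∧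
    (∃ (B : PRAC α) (q1 q2 : ℝ), B.Recognizes (L1 ∪ L2) q1 q2) ∧
    (∃ (B : PRAC α) (q1 q2 : ℝ), B.Recognizes L1ᶜ q1 q2) := by
  obtain ⟨B1, hB1⟩ := PRACaux.amplify h1
  obtain ⟨B2, hB2⟩ := PRACaux.amplify h2
  obtain ⟨C1, hC1⟩ := PRACaux.amplify (PRACaux.recognizes_comp h1)
  obtain ⟨C2, hC2⟩ := PRACaux.amplify (PRACaux.recognizes_comp h2)
  refine ⟨⟨_, _, _, PRACaux.recognizes_inter hB1 hB2⟩, ?_,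
    ⟨_, _, _, PRACaux.recognizes_comp h1⟩⟩
  have hU := PRACaux.recognizes_comp (PRACaux.recognizes_inter hC1 hC2)
  have hset : (L1ᶜ ∩ L2ᶜ)ᶜ = L1 ∪ L2 := by
    rw [Set.compl_inter, compl_compl, compl_compl]
  rw [hset] at hU
  exact ⟨_, _, _, hU⟩
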